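/- Suppose {L̃_{2i} | i ∈ ℤ} satisfies [L̃_{2i}, L̃_{2j}] = 2(i − j) L̃_{2i+2j}. Define S_k := 2L̃_{2k+2} − 8c L̃_{2k} for k ≥ 0. Then [S_k, S_n] = −2(2n − 2k) S_{n+k+1} + 8c(2n − 2k) S_{n+k}; in particular the even-index elements {L̃_{2i}} form a Lie subalgebra of the Witt algebra (under L̃_{2i} = L_{2i}) and the BKP additional flow relations [∂/∂t*_{2k+1}, ∂/∂t*_{2n+1}] = −2(2n−2k) ∂/∂t*_{2n+2k+3} + 8c(2n−2k) ∂/∂t*_{2n+2k+1} are realized by k ↦ S_k. -/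
import Mathlib


/-- In the Witt algebra with `[L_i, L_j] = (i−j)L_{i+j}`, the even-indexed
elements `L̃_{2i} := L_{2i}` form a Lie subalgebra: `[L̃_{2i}, L̃_{2j}] = 2(i−j)L̃_{2(i+j)}`;
and the elements `S_k := 2L̃_{2k+2} − 8c L̃_{2k}` (k ≥ 0) satisfy
`[S_k, S_n] = −2(2n − 2k) S_{n+k+1} + 8c(2n − 2k) S_{n+k}`, so `k ↦ S_k` realizes the
BKP additional-flow relations inside the Witt algebra. -/
theorem stmt10 {V : Type*} [LieRing V] [LieAlgebra ℚ V]
    (L : ℤ → V)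
    (hWitt : ∀ i j : ℤ, ⁅L i, L j⁆ = ((i - j : ℤ) : ℚ) • L (i + j))
    (c : ℚ)
    (L2 : ℤ → V) (hL2 : ∀ i : ℤ, L2 i = L (2 * i))
    (S : ℤ → V) (hS : ∀ k : ℤ, S k = (2 : ℚ) • L2 (k + 1) - (8 * c) • L2 k) :
    (∀ i j : ℤ, ⁅L2 i, L2 j⁆ = ((2 * (i - j) : ℤ) : ℚ) • L2 (i + j))
    ∧ (∀ k n : ℤ, 0 ≤ k → 0 ≤ n →
        ⁅S k, S n⁆
          = (-(2 * ((2 * n - 2 * k : ℤ) : ℚ))) • S (n + k + 1)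
              + (8 * c * ((2 * n - 2 * k : ℤ) : ℚ)) • S (n + k)) := by
  have hsub : ∀ i j : ℤ, ⁅L2 i, L2 j⁆ = ((2 * (i - j) : ℤ) : ℚ) • L2 (i + j) := by
    intro i j
    rw [hL2, hL2, hWitt, hL2]
    congr 2
    · ring
    · ring
  refine ⟨hsub, fun k n _ _ => ?_⟩
  simp only [hS, lie_sub, sub_lie, lie_smul, smul_lie, hsub, smul_smul, smul_sub]
  rw [show k + 1 + (n + 1) = n + k + 1 + 1 from by ring,
    show k + 1 + n = n + k + 1 from by ring,
    show k + (n + 1) = n + k + 1 from by ring,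
    show k + n = n + k from by ring]
  push_cast
  module
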